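/- arXiv:1608.08592 — 4 statements merged into one kernel-verified Lean document; each statement's English description precedes it below -/
import Mathlib

section
/- Let q ≥ 1 and let S be a finite set of words over the alphabet Σ = {x_1, …, x_q}. Then the iterated shuffle S^† is co-finite (i.e., Σ* \ S^† is finite) if and only if for each i ∈ {1, …, q} the collection 𝒯_i is non-empty. -/
/-- `Shuffle u v w` means that the word `w` is an interleaving (shuffle) of the
words `u` and `v`. -/
inductive Shuffle {α : Type*} : List α → List α → List α → Prop
  | nil : Shuffle [] [] []
  | left {a : α} {u v w : List α} : Shuffle u v w → Shuffle (a :: u) v (a :: w)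
  | right {a : α} {u v w : List α} : Shuffle u v w → Shuffle u (a :: v) (a :: w)

/-- `IterShuffle S y` means `y` belongs to the iterated shuffle `S^†`, i.e. `y`
can be obtained by shuffling together finitely many (possibly zero) words of `S`. -/
inductive IterShuffle {α : Type*} (S : Set (List α)) : List α → Prop
  | nil : IterShuffle S []
  | step {u w y : List α} : u ∈ S → IterShuffle S w → Shuffle u w y → IterShuffle S y

/-- `TiNonempty S i` says that the collection `𝒯ᵢ` of subsets `Tᵢ ⊆ S` of the
required form is non-empty: either `{xᵢ} ⊆ S`, or `S` contains words
`xᵢ^{m_{i,1}}, …, xᵢ^{m_{i,hᵢ}}` (with `hᵢ ≥ 2`, all exponents `≥ 2` and of gcd `1`)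
together with words `xᵢ xⱼ^{a_{i,j}}` and `xⱼ^{b_{j,i}} xᵢ` for all `j ≠ i`. -/
def TiNonempty {q : ℕ} (S : Set (List (Fin q))) (i : Fin q) : Prop :=
  [i] ∈ S ∨
    ∃ (M : Finset ℕ) (a b : Fin q → ℕ),
      2 ≤ M.card ∧ (∀ n ∈ M, 2 ≤ n) ∧ M.gcd id = 1 ∧
      (∀ n ∈ M, List.replicate n i ∈ S) ∧
      ∀ j : Fin q, j ≠ i →
        1 ≤ a j ∧ 1 ≤ b j ∧
        i :: List.replicate (a j) j ∈ S ∧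
        List.replicate (b j) j ++ [i] ∈ S


open List

section Aux
variable {α : Type*}

theorem shuffle_nil_left : ∀ v : List α, Shuffle [] v v
  | [] => .nil
  | _ :: v => .right (shuffle_nil_left v)

theorem shuffle_nil_right : ∀ u : List α, Shuffle u [] u
  | [] => .nil
  | _ :: u => .left (shuffle_nil_right u)

theorem Shuffle.len {u v w : List α} (h : Shuffle u v w) :
    w.length = u.length + v.length := by
  induction h with
  | nil => simp
  | left _ ih => simp [ih]; omega
  | right _ ih => simp [ih]; omega

theorem Shuffle.count [DecidableEq α] {u v w : List α} (h : Shuffle u v w) (c : α) :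
    w.count c = u.count c + v.count c := by
  induction h with
  | nil => simp
  | left _ ih => simp [List.count_cons, ih]; omega
  | right _ ih => simp [List.count_cons, ih]; omega

theorem Shuffle.sublist_left {u v w : List α} (h : Shuffle u v w) : u <+ w := by
  induction h with
  | nil => simp
  | left _ ih => exact ih.cons₂ _
  | right _ ih => exact ih.cons _

theorem Shuffle.sublist_right {u v w : List α} (h : Shuffle u v w) : v <+ w := by
  induction h with
  | nil => simp
  | left _ ih => exact ih.cons _
  | right _ ih => exact ih.cons₂ _

theorem Shuffle.append {u₁ v₁ w₁ u₂ v₂ w₂ : List α} (h₁ : Shuffle u₁ v₁ w₁)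
    (h₂ : Shuffle u₂ v₂ w₂) : Shuffle (u₁ ++ u₂) (v₁ ++ v₂) (w₁ ++ w₂) := by
  induction h₁ with
  | nil => simpa using h₂
  | left _ ih => exact .left ih
  | right _ ih => exact .right ih

theorem shuffle_nil_inv {u v : List α} (h : Shuffle u v []) : u = [] ∧ v = [] := by
  cases h; exact ⟨rfl, rfl⟩

theorem shuffle_cons_inv {u v w : List α} {c : α} (h : Shuffle u v (c :: w)) :
    (∃ u', u = c :: u' ∧ Shuffle u' v w) ∨ (∃ v', v = c :: v' ∧ Shuffle u v' w) := by
  cases h with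
  | left h => exact .inl ⟨_, rfl, h⟩
  | right h => exact .inr ⟨_, rfl, h⟩

theorem shuffle_assoc {u v w : List α} (h2 : Shuffle u v w) :
    ∀ {a b : List α}, Shuffle a b u → ∃ t, Shuffle b v t ∧ Shuffle a t w := by
  induction h2 with
  | nil =>
    intro a b h
    obtain ⟨rfl, rfl⟩ := shuffle_nil_inv h
    exact ⟨[], .nil, .nil⟩
  | @left c u' v w' _ ih =>
    intro a b h
    rcases shuffle_cons_inv h with ⟨a', rfl, ha⟩ | ⟨b', rfl, hb⟩
    · obtain ⟨t, h1, h2⟩ := ih ha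
      exact ⟨t, h1, .left h2⟩
    · obtain ⟨t, h1, h2⟩ := ih hb
      exact ⟨c :: t, .left h1, .right h2⟩
  | @right c u v' w' _ ih =>
    intro a b h
    obtain ⟨t, h1, h2⟩ := ih h
    exact ⟨c :: t, .right h1, .right h2⟩

theorem IterShuffle.shuffle {S : Set (List α)} {u v w : List α}
    (hu : IterShuffle S u) (hv : IterShuffle S v) (h : Shuffle u v w) :
    IterShuffle S w := by
  induction hu generalizing v w with
  | nil =>
    have : v = w := h.sublist_right.eq_of_length (by simpa using h.len.symm)
    exact this ▸ hv
  | @step u₀ u' y hu₀ _ hsh ih =>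
    obtain ⟨t, h1, h2⟩ := shuffle_assoc h hsh
    exact .step hu₀ (ih hv h1) h2

theorem IterShuffle.append {S : Set (List α)} {u v : List α}
    (hu : IterShuffle S u) (hv : IterShuffle S v) : IterShuffle S (u ++ v) := by
  refine hu.shuffle hv ?_
  simpa using Shuffle.append (shuffle_nil_right u) (shuffle_nil_left v)


theorem shuffle_filter (p : α → Bool) : ∀ w : List α,
    Shuffle (w.filter p) (w.filter (fun a => !(p a))) w := by
  intro w
  induction w with
  | nil => exact .nil
  | cons c t ih =>
    by_cases h : p c
    · simpa [List.filter_cons, h] using Shuffle.left ih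
    · simp only [Bool.not_eq_true] at h
      simpa [List.filter_cons, h] using Shuffle.right ih

theorem iterShuffle_assemble_aux [DecidableEq α] {S : Set (List α)} :
    ∀ (n : ℕ) (w : List α), w.length = n →
      (∀ k : α, IterShuffle S (List.replicate (w.count k) k)) →
    IterShuffle S w := by
  intro n
  induction n using Nat.strong_induction_on with
  | _ n ih =>
  intro w hn hk
  match w, hn with
  | [], _ => exact .nil
  | c :: t, hn =>
    have hsh := shuffle_filter (fun a => a == c) (c :: t)
    have h1 : (c :: t).filter (fun a => a == c) = List.replicate ((c :: t).count c) c :=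
      List.filter_beq _
    set w₂ := (c :: t).filter (fun a => !(a == c)) with hw₂
    have hlen : w₂.length < n := by
      rw [← hn]
      have : w₂.length ≤ t.length := by
        simp only [hw₂, List.filter_cons, beq_self_eq_true, Bool.not_true]
        simpa using List.length_filter_le _ t
      simpa using Nat.lt_succ_of_le this
    have hk₂ : ∀ k : α, IterShuffle S (List.replicate (w₂.count k) k) := by
      intro k
      by_cases hkc : k = c
      · have : w₂.count k = 0 := by
          refine List.count_eq_zero.mpr ?_
          simp [hw₂, List.mem_filter, hkc]
        rw [this]; exact .nil
      · have : w₂.count k = (c :: t).count k := by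
          simp only [hw₂]
          exact List.count_filter (by simp [hkc])
        rw [this]; exact hk k
    have h₂ : IterShuffle S w₂ := ih _ hlen w₂ rfl hk₂
    have h₁ : IterShuffle S ((c :: t).filter (fun a => a == c)) := by
      rw [h1]; exact hk c
    exact h₁.shuffle h₂ hsh

theorem exists_last [DecidableEq α] {c : α} : ∀ {w : List α}, c ∈ w →
    ∃ w₁ w₂, w = w₁ ++ c :: w₂ ∧ c ∉ w₂ := by
  intro w hc
  induction w with
  | nil => simp at hc
  | cons d t ih =>
    by_cases h : c ∈ t
    · obtain ⟨t₁, t₂, rfl, h2⟩ := ih h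
      exact ⟨d :: t₁, t₂, rfl, h2⟩
    · have : c = d := by rcases List.mem_cons.mp hc with h' | h' <;> tauto
      subst this
      exact ⟨[], t, rfl, h⟩

theorem extract [DecidableEq α] : ∀ (l : List α) (A : ℕ) (a : α), A ≤ l.count a →
    ∃ l', Shuffle (List.replicate A a) l' l ∧ l'.count a + A = l.count a ∧
      ∀ b, b ≠ a → l'.count b = l.count b := by
  intro l
  induction l with
  | nil =>
    intro A a hA
    simp at hA
    subst hA
    exact ⟨[], .nil, by simp, by simp⟩
  | cons c t ih =>
    intro A a hA
    match A with
    | 0 => exact ⟨c :: t, shuffle_nil_left _, by simp, fun _ _ => rfl⟩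
    | A + 1 =>
      by_cases hca : c = a
      · subst hca
        have : A ≤ t.count c := by simp [List.count_cons] at hA ⊢; omega
        obtain ⟨t', hsh, hc1, hc2⟩ := ih A c this
        refine ⟨t', ?_, ?_, ?_⟩
        · simpa [List.replicate_succ] using Shuffle.left hsh
        · simp [List.count_cons]; omega
        · intro b hb; simp [List.count_cons, hb, Ne.symm hb, hc2 b hb]
      · have : A + 1 ≤ t.count a := by simpa [List.count_cons, hca, Ne.symm] using hA
        obtain ⟨t', hsh, hc1, hc2⟩ := ih (A + 1) a this
        refine ⟨c :: t', Shuffle.right hsh, ?_, ?_⟩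
        · simpa [List.count_cons, hca, Ne.symm] using hc1
        · intro b hb
          by_cases hbc : b = c
          · subst hbc; simp [List.count_cons, hc2 b hb]
          · simp [List.count_cons, hbc, hc2 b hb]
theorem iterShuffle_assemble [DecidableEq α] {S : Set (List α)} (w : List α)
    (hk : ∀ k : α, IterShuffle S (List.replicate (w.count k) k)) : IterShuffle S w :=
  iterShuffle_assemble_aux w.length w rfl hk


theorem cover [DecidableEq α] {S : Set (List α)} {i j : α} (hij : j ≠ i) {A B : ℕ}
    (hA : 1 ≤ A) (hB : 1 ≤ B)
    (hua : (i :: List.replicate A j) ∈ S) (hub : (List.replicate B j ++ [i]) ∈ S) :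
    ∀ (n : ℕ) (w : List α), w.count i = n → n * (A + B) ≤ w.count j →
    ∃ w', w'.count i = 0 ∧ (∀ k, k ≠ i → k ≠ j → w'.count k = w.count k) ∧
      w.count j ≤ w'.count j + n * (A + B) ∧ (IterShuffle S w' → IterShuffle S w) := by
  intro n
  induction n with
  | zero =>
    intro w h0 _
    exact ⟨w, h0, fun _ _ _ => rfl, by omega, id⟩
  | succ n ihn =>
    intro w hcnt hcj
    have key : (n + 1) * (A + B) = n * (A + B) + (A + B) := by ring
    have hiw : i ∈ w := List.count_pos_iff.mp (by omega)
    obtain ⟨w₁, w₂, rfl, hnot⟩ := exists_last hiw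
    have hw2i : w₂.count i = 0 := List.count_eq_zero.mpr hnot
    have hw1i : w₁.count i = n := by
      have := hcnt
      simp [List.count_append, List.count_cons, hw2i] at this ⊢
      omega
    have hcj' : (w₁ ++ i :: w₂).count j = w₁.count j + w₂.count j := by
      simp [List.count_append, List.count_cons, hij, Ne.symm hij]
    by_cases hc : A ≤ w₂.count j
    · obtain ⟨t', hsh, ht1, ht2⟩ := extract w₂ A j hc
      have hshu : Shuffle (i :: List.replicate A j) (w₁ ++ t') (w₁ ++ i :: w₂) := by
        have := Shuffle.append (shuffle_nil_left w₁) (Shuffle.left (a := i) hsh)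
        simpa using this
      have hti : t'.count i = 0 := by rw [ht2 i (Ne.symm hij)]; exact hw2i
      have hvi : (w₁ ++ t').count i = n := by simp [List.count_append, hti, hw1i]
      have hvj : n * (A + B) ≤ (w₁ ++ t').count j := by
        simp only [List.count_append]
        have h1 : (n + 1) * (A + B) ≤ w₁.count j + w₂.count j := by omega
        omega
      obtain ⟨w', hw'1, hw'2, hw'3, hw'4⟩ := ihn (w₁ ++ t') hvi hvj
      refine ⟨w', hw'1, ?_, ?_, ?_⟩
      · intro k hki hkj
        rw [hw'2 k hki hkj]
        simp [List.count_append, List.count_cons, hki, Ne.symm hki, ht2 k hkj]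
      · simp only [List.count_append] at hw'3 ⊢
        simp [List.count_cons, hij, Ne.symm hij]
        omega
      · intro h
        exact .step hua (hw'4 h) hshu
    · push_neg at hc
      have hcB : B ≤ w₁.count j := by
        have : (n + 1) * (A + B) ≤ w₁.count j + w₂.count j := by omega
        nlinarith
      obtain ⟨t', hsh, ht1, ht2⟩ := extract w₁ B j hcB
      have hshu : Shuffle (List.replicate B j ++ [i]) (t' ++ w₂) (w₁ ++ i :: w₂) := by
        have : Shuffle [i] w₂ (i :: w₂) := Shuffle.left (shuffle_nil_left w₂)
        exact Shuffle.append hsh this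
      have hti : t'.count i = n := by rw [ht2 i (Ne.symm hij)]; exact hw1i
      have hvi : (t' ++ w₂).count i = n := by simp [List.count_append, hti, hw2i]
      have hvj : n * (A + B) ≤ (t' ++ w₂).count j := by
        simp only [List.count_append]
        have : (n + 1) * (A + B) ≤ w₁.count j + w₂.count j := by omega
        omega
      obtain ⟨w', hw'1, hw'2, hw'3, hw'4⟩ := ihn (t' ++ w₂) hvi hvj
      refine ⟨w', hw'1, ?_, ?_, ?_⟩
      · intro k hki hkj
        rw [hw'2 k hki hkj]
        simp [List.count_append, List.count_cons, hki, Ne.symm hki, ht2 k hkj]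
      · simp only [List.count_append] at hw'3 ⊢
        simp [List.count_cons, hij, Ne.symm hij]
        omega
      · intro h
        exact .step hub (hw'4 h) hshu

theorem finset_bezout (M : Finset ℕ) :
    ∃ P Q : ℕ, P ∈ AddSubmonoid.closure (M : Set ℕ) ∧ Q ∈ AddSubmonoid.closure (M : Set ℕ) ∧
      P = Q + M.gcd id := by
  classical
  induction M using Finset.induction_on with
  | empty => exact ⟨0, 0, zero_mem _, zero_mem _, by simp⟩
  | @insert m M hm ih =>
    obtain ⟨P, Q, hP, hQ, hPQ⟩ := ih
    have hmono : AddSubmonoid.closure (M : Set ℕ) ≤ AddSubmonoid.closure ((insert m M : Finset ℕ) : Set ℕ) := by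
      apply AddSubmonoid.closure_mono
      simp
    have hmem : m ∈ AddSubmonoid.closure ((insert m M : Finset ℕ) : Set ℕ) :=
      AddSubmonoid.subset_closure (by simp)
    have hgcd : (insert m M).gcd id = Nat.gcd m (M.gcd id) := by
      rw [Finset.gcd_insert]; rfl
    set g' := M.gcd id with hg'
    rcases Nat.eq_zero_or_pos m with hm0 | hm1
    · subst hm0
      refine ⟨P, Q, hmono hP, hmono hQ, ?_⟩
      rw [hgcd, Nat.gcd_zero_left]
      exact hPQ
    rcases Nat.eq_zero_or_pos g' with hg0 | hg1
    · refine ⟨m, 0, hmem, zero_mem _, ?_⟩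
      rw [hgcd, hg0, Nat.gcd_zero_right]
      omega
    -- both positive: Bezout
    · set a := Nat.gcdA m g' with ha
      set b := Nat.gcdB m g' with hb
      have hbez : (Nat.gcd m g' : ℤ) = m * a + g' * b := Nat.gcd_eq_gcd_ab m g'
      set k : ℕ := a.natAbs + b.natAbs + 1 with hk
      have hka : a.natAbs + 1 ≤ k := by omega
      have hkb : b.natAbs + 1 ≤ k := by omega
      have hka' : (a.natAbs : ℤ) + 1 ≤ (k : ℤ) := by exact_mod_cast hka
      have hkb' : (b.natAbs : ℤ) + 1 ≤ (k : ℤ) := by exact_mod_cast hkb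
      have hg1' : (1:ℤ) ≤ (g' : ℤ) := by exact_mod_cast hg1
      have hm1' : (1:ℤ) ≤ (m : ℤ) := by exact_mod_cast hm1
      have hα : (0:ℤ) ≤ a + k * g' := by
        have h1 : (a.natAbs : ℤ) ≤ k * g' := by nlinarith
        have h2 : -(a.natAbs : ℤ) ≤ a := by omega
        linarith
      have hβ : (0:ℤ) ≤ k * m - b := by
        have h1 : (b.natAbs : ℤ) ≤ k * m := by nlinarith
        have h2 : b ≤ (b.natAbs : ℤ) := by omega
        linarith
      set αn : ℕ := (a + k * g').toNat with hαn
      set βn : ℕ := (k * m - b).toNat with hβn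
      refine ⟨m * αn + βn * Q, βn * P + ?_, ?_, ?_, ?_⟩
      · exact 0
      · exact add_mem (by simpa [mul_comm] using AddSubmonoid.nsmul_mem _ hmem αn)
          (AddSubmonoid.nsmul_mem _ (hmono hQ) βn)
      · simpa using AddSubmonoid.nsmul_mem _ (hmono hP) βn
      · rw [hgcd]
        have hcast : (m : ℤ) * αn + βn * Q = βn * P + 0 + Nat.gcd m g' := by
          rw [hαn, hβn, Int.toNat_of_nonneg hα, Int.toNat_of_nonneg hβ]
          have hPQ' : (P : ℤ) = Q + g' := by exact_mod_cast hPQ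
          rw [hbez, hPQ']
          ring
        exact_mod_cast hcast

theorem frobenius_bound {M : Finset ℕ} (h : M.gcd id = 1) :
    ∃ F : ℕ, ∀ n, F ≤ n → n ∈ AddSubmonoid.closure (M : Set ℕ) := by
  obtain ⟨P, Q, hP, hQ, hPQ⟩ := finset_bezout M
  rw [h] at hPQ
  rcases Nat.eq_zero_or_pos Q with h0 | hpos
  · subst h0
    simp at hPQ
    subst hPQ
    exact ⟨0, fun n _ => by simpa using AddSubmonoid.nsmul_mem _ hP n⟩
  · refine ⟨Q * Q, fun n hn => ?_⟩
    have hr : n % Q < Q := Nat.mod_lt _ hpos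
    have hq : Q ≤ n / Q := Nat.le_div_iff_mul_le hpos |>.mpr (by nlinarith)
    have hdm := Nat.div_add_mod n Q
    have hrep : n = (n / Q - n % Q) * Q + (n % Q) * P := by
      rw [hPQ]
      have : n % Q ≤ n / Q := by omega
      nlinarith [Nat.sub_add_cancel this]
    rw [hrep]
    exact add_mem (by simpa [mul_comm] using AddSubmonoid.nsmul_mem _ hQ (n / Q - n % Q))
      (by simpa [mul_comm] using AddSubmonoid.nsmul_mem _ hP (n % Q))

theorem closure_dvd {K : Set ℕ} {d : ℕ} (hd : ∀ k ∈ K, d ∣ k) {n : ℕ}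
    (hn : n ∈ AddSubmonoid.closure K) : d ∣ n := by
  induction hn using AddSubmonoid.closure_induction with
  | mem x hx => exact hd x hx
  | zero => exact dvd_zero d
  | add x y _ _ hx hy => exact dvd_add hx hy

theorem rep_closure {S : Set (List α)} {i : α} {K : Set ℕ}
    (hK : ∀ m ∈ K, List.replicate m i ∈ S) {n : ℕ}
    (hn : n ∈ AddSubmonoid.closure K) : IterShuffle S (List.replicate n i) := by
  induction hn using AddSubmonoid.closure_induction with
  | mem x hx => exact .step (hK x hx) .nil (shuffle_nil_right _)
  | zero => exact .nil
  | add x y _ _ hx hy => rw [List.replicate_add]; exact hx.append hy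

theorem unary_closure [DecidableEq α] {S : Set (List α)} {i : α} {y : List α}
    (h : IterShuffle S y) : ∀ n, y = List.replicate n i →
      n ∈ AddSubmonoid.closure {k : ℕ | List.replicate k i ∈ S} := by
  induction h with
  | nil =>
    intro n hn
    have : n = 0 := by simpa using congrArg List.length hn.symm
    subst this
    exact zero_mem _
  | @step u w y hu _ hsh ih =>
    intro n hn
    subst hn
    obtain ⟨s, hs, rfl⟩ := List.sublist_replicate_iff.mp hsh.sublist_left
    obtain ⟨t, ht, rfl⟩ := List.sublist_replicate_iff.mp hsh.sublist_right
    have hlen : n = s + t := by simpa using hsh.len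
    subst hlen
    exact add_mem (AddSubmonoid.subset_closure hu) (ih t rfl)

theorem mem_word {S : Set (List α)} [DecidableEq α] {y : List α} {c : α}
    (h : IterShuffle S y) (hc : c ∈ y) : ∃ u ∈ S, u <+ y ∧ c ∈ u := by
  induction h with
  | nil => simp at hc
  | @step u w y hu _ hsh ih =>
    have := hsh.count c
    have hcy : 0 < y.count c := List.count_pos_iff.mpr hc
    by_cases hcu : c ∈ u
    · exact ⟨u, hu, hsh.sublist_left, hcu⟩
    · have : 0 < w.count c := by
        have h0 : u.count c = 0 := List.count_eq_zero.mpr hcu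
        omega
      obtain ⟨u', h1, h2, h3⟩ := ih (List.count_pos_iff.mp this)
      exact ⟨u', h1, h2.trans hsh.sublist_right, h3⟩

theorem length_eq_sum_count [DecidableEq α] [Fintype α] (w : List α) :
    w.length = ∑ a : α, w.count a := by
  induction w with
  | nil => simp
  | cons c t ih =>
    simp only [List.length_cons, List.count_cons, ih]
    rw [Finset.sum_add_distrib]
    simp [Finset.sum_ite_eq]

theorem cover_finset {q : ℕ} {S : Set (List (Fin q))} (j₀ : Fin q) (a b : Fin q → Fin q → ℕ) :
    ∀ P : Finset (Fin q),
    (∀ i ∈ P, i ≠ j₀ ∧ 1 ≤ a i j₀ ∧ 1 ≤ b i j₀ ∧ (i :: List.replicate (a i j₀) j₀) ∈ S ∧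
      (List.replicate (b i j₀) j₀ ++ [i]) ∈ S) →
    ∀ w : List (Fin q), (∑ i ∈ P, w.count i * (a i j₀ + b i j₀)) ≤ w.count j₀ →
    ∃ w', (∀ i ∈ P, w'.count i = 0) ∧ (∀ k, k ∉ P → k ≠ j₀ → w'.count k = w.count k) ∧
      w.count j₀ ≤ w'.count j₀ + (∑ i ∈ P, w.count i * (a i j₀ + b i j₀)) ∧
      (IterShuffle S w' → IterShuffle S w) := by
  intro P
  induction P using Finset.induction_on with
  | empty =>
    intro _ w _
    exact ⟨w, by simp, fun _ _ _ => rfl, by simp, id⟩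
  | @insert i P hiP ih =>
    intro hP w hw
    obtain ⟨hij₀, hai, hbi, hua, hub⟩ := hP i (Finset.mem_insert_self i P)
    rw [Finset.sum_insert hiP] at hw
    obtain ⟨v, hv1, hv2, hv3, hv4⟩ :=
      cover (Ne.symm hij₀) hai hbi hua hub (w.count i) w rfl (by omega)
    have hsum : (∑ k ∈ P, v.count k * (a k j₀ + b k j₀)) =
        (∑ k ∈ P, w.count k * (a k j₀ + b k j₀)) := by
      refine Finset.sum_congr rfl fun k hk => ?_
      have hki : k ≠ i := fun h => hiP (h ▸ hk)
      have hkj : k ≠ j₀ := (hP k (Finset.mem_insert_of_mem hk)).1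
      rw [hv2 k hki hkj]
    obtain ⟨w', hw'1, hw'2, hw'3, hw'4⟩ := ih (fun k hk => hP k (Finset.mem_insert_of_mem hk)) v
      (by rw [hsum]; omega)
    refine ⟨w', ?_, ?_, ?_, fun h => hv4 (hw'4 h)⟩
    · intro k hk
      rcases Finset.mem_insert.mp hk with rfl | hk'
      · rw [hw'2 k hiP hij₀]; exact hv1
      · exact hw'1 k hk'
    · intro k hk hkj
      have hki : k ≠ i := fun h => hk (h ▸ Finset.mem_insert_self i P)
      have hkP : k ∉ P := fun h => hk (Finset.mem_insert_of_mem h)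
      rw [hw'2 k hkP hkj, hv2 k hki hkj]
    · rw [Finset.sum_insert hiP]
      rw [hsum] at hw'3
      omega


theorem easy_rep {q : ℕ} {S : Set (List (Fin q))} {i : Fin q} (hi : [i] ∈ S) :
    ∀ n, IterShuffle S (List.replicate n i) := by
  intro n
  induction n with
  | zero => exact .nil
  | succ n ih =>
    rw [List.replicate_succ]
    exact .step hi ih (Shuffle.left (shuffle_nil_left _))

theorem mpr_claim {q : ℕ} {S : Set (List (Fin q))} (h : ∀ i, TiNonempty S i) (i : Fin q) :
    ∃ (F : ℕ) (a b : Fin q → ℕ),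
      (∀ n, F ≤ n → IterShuffle S (List.replicate n i)) ∧
      (F = 0 ∨ ∀ j, j ≠ i → 1 ≤ a j ∧ 1 ≤ b j ∧ (i :: List.replicate (a j) j) ∈ S ∧
        (List.replicate (b j) j ++ [i]) ∈ S) := by
  rcases h i with hi | ⟨M, a, b, _, _, hgcd, hMS, hmix⟩
  · exact ⟨0, fun _ => 0, fun _ => 0, fun n _ => easy_rep hi n, Or.inl rfl⟩
  · obtain ⟨F, hF⟩ := frobenius_bound hgcd
    refine ⟨F, a, b, fun n hn => ?_, Or.inr hmix⟩
    exact rep_closure (fun m hm => hMS m (by exact_mod_cast hm)) (hF n hn)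

theorem main_mpr {q : ℕ} (hq : 1 ≤ q) {S : Set (List (Fin q))} (h : ∀ i, TiNonempty S i) :
    {w : List (Fin q) | ¬ IterShuffle S w}.Finite := by
  classical
  choose F a b h1 h2 using fun i => mpr_claim h i
  set G := Finset.univ.sup F with hG
  set AB := Finset.univ.sup (fun i => Finset.univ.sup (fun j => a i j + b i j)) with hAB
  set X := q * G * AB + G + 1 with hX
  apply Set.Finite.subset (List.finite_length_lt (Fin q) (q * X + 1))
  intro w hw
  simp only [Set.mem_setOf_eq] at hw ⊢
  by_contra hlen
  push_neg at hlen
  apply hw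
  have hFG : ∀ i, F i ≤ G := fun i => Finset.le_sup (Finset.mem_univ i)
  have hABle : ∀ i j, a i j + b i j ≤ AB := fun i j =>
    le_trans (Finset.le_sup (f := fun j => a i j + b i j) (Finset.mem_univ j))
      (Finset.le_sup (f := fun i => Finset.univ.sup fun j => a i j + b i j)
        (Finset.mem_univ i))
  set P := Finset.univ.filter (fun i => w.count i < F i) with hP
  by_cases hPe : P = ∅
  · refine iterShuffle_assemble w fun k => h1 k _ ?_
    by_contra hk
    push_neg at hk
    have : k ∈ P := by simp [hP, hk]
    simp [hPe] at this
  · -- find a big letter j₀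
    have hbig : ∃ j₀ : Fin q, X ≤ w.count j₀ := by
      by_contra hb
      push_neg at hb
      have hsum : (∑ k : Fin q, (w.count k + 1)) ≤ q * X := by
        have hh := Finset.sum_le_card_nsmul Finset.univ (fun k : Fin q => w.count k + 1) X
          (fun x _ => by have := hb x; omega)
        simpa [Finset.card_univ, mul_comm] using hh
      have h2' : (∑ k : Fin q, (w.count k + 1)) = w.length + q := by
        rw [Finset.sum_add_distrib, ← length_eq_sum_count]
        simp
      omega
    obtain ⟨j₀, hj₀⟩ := hbig
    rw [hX] at hj₀
    have hj₀G : G + 1 ≤ w.count j₀ := by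
      have : G + 1 ≤ X := by omega
      omega
    have hj₀P : j₀ ∉ P := by
      simp only [hP, Finset.mem_filter]
      rintro ⟨-, hcon⟩
      have := hFG j₀
      omega
    have hPprop : ∀ i ∈ P, i ≠ j₀ ∧ 1 ≤ a i j₀ ∧ 1 ≤ b i j₀ ∧
        (i :: List.replicate (a i j₀) j₀) ∈ S ∧ (List.replicate (b i j₀) j₀ ++ [i]) ∈ S := by
      intro i hi
      have hij₀ : i ≠ j₀ := fun hcon => hj₀P (hcon ▸ hi)
      have hFi : w.count i < F i := by
        simp only [hP, Finset.mem_filter] at hi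
        exact hi.2
      rcases h2 i with h0 | hmix
      · omega
      · obtain ⟨ha1, hb1, hua, hub⟩ := hmix j₀ (Ne.symm hij₀)
        exact ⟨hij₀, ha1, hb1, hua, hub⟩
    have hsumP : (∑ i ∈ P, w.count i * (a i j₀ + b i j₀)) ≤ q * G * AB := by
      calc (∑ i ∈ P, w.count i * (a i j₀ + b i j₀)) ≤ ∑ _i ∈ P, G * AB := by
            apply Finset.sum_le_sum
            intro i hi
            have h1' : w.count i ≤ G := by
              simp only [hP, Finset.mem_filter] at hi
              have := hFG i
              omega
            exact Nat.mul_le_mul h1' (hABle i j₀)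
        _ = P.card * (G * AB) := by rw [Finset.sum_const, smul_eq_mul]
        _ ≤ q * (G * AB) := by
            apply Nat.mul_le_mul_right
            simpa using Finset.card_le_card (Finset.subset_univ P)
        _ = q * G * AB := by ring
    obtain ⟨w', hw'1, hw'2, hw'3, hw'4⟩ := cover_finset j₀ a b
      P hPprop w (by omega)
    apply hw'4
    refine iterShuffle_assemble w' fun k => ?_
    by_cases hkP : k ∈ P
    · rw [hw'1 k hkP]; exact .nil
    · by_cases hkj : k = j₀
      · subst hkj
        refine h1 k _ ?_
        have := hFG k
        omega
      · rw [hw'2 k hkP hkj]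
        refine h1 k _ ?_
        by_contra hk
        push_neg at hk
        exact hkP (by simp [hP, hk])

theorem main_mp {q : ℕ} {S : Set (List (Fin q))} (hS : S.Finite)
    (hfin : {w : List (Fin q) | ¬ IterShuffle S w}.Finite) : ∀ i : Fin q, TiNonempty S i := by
  classical
  -- a length bound on the complement
  have hbdd : ∃ L : ℕ, ∀ w : List (Fin q), L < w.length → IterShuffle S w := by
    obtain ⟨L, hL⟩ := (hfin.image List.length).bddAbove
    refine ⟨L, fun w hw => ?_⟩
    by_contra hcon
    have : w.length ∈ List.length '' {w | ¬ IterShuffle S w} := ⟨w, hcon, rfl⟩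
    exact absurd (hL this) (by omega)
  obtain ⟨L, hL⟩ := hbdd
  intro i
  by_cases hi : [i] ∈ S
  · exact Or.inl hi
  right
  set K : Set ℕ := {k : ℕ | List.replicate k i ∈ S} with hK
  have hKfin : K.Finite := by
    have hinj : Function.Injective (fun k : ℕ => List.replicate k i) := by
      intro m n hmn
      simpa using congrArg List.length hmn
    exact Set.Finite.preimage hinj.injOn hS
  set Kfin := hKfin.toFinset with hKfinDef
  have hmemK : ∀ k, k ∈ Kfin ↔ List.replicate k i ∈ S := by
    intro k
    rw [hKfinDef, Set.Finite.mem_toFinset]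
    rfl
  have h1K : (1 : ℕ) ∉ Kfin := by
    rw [hmemK]
    simpa using hi
  -- gcd of all powers is 1
  have hclos : ∀ n, L < n → n ∈ AddSubmonoid.closure K := by
    intro n hn
    apply unary_closure (i := i) (hL (List.replicate n i) (by simpa using hn)) n rfl
  have hgdvd : ∀ n ∈ AddSubmonoid.closure K, Kfin.gcd id ∣ n := by
    intro n hn
    refine closure_dvd ?_ hn
    intro k hk
    exact Finset.gcd_dvd ((hmemK k).mpr hk)
  have hgcd1 : Kfin.gcd id = 1 := by
    have d1 := hgdvd (L + 1) (hclos _ (by omega))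
    have d2 := hgdvd (L + 2) (hclos _ (by omega))
    have : Kfin.gcd id ∣ 1 := by
      have := Nat.dvd_sub d2 d1
      simpa using this
    exact Nat.dvd_one.mp this
  set M := Kfin.erase 0 with hM
  have hM2 : ∀ n ∈ M, 2 ≤ n := by
    intro n hn
    rw [hM, Finset.mem_erase] at hn
    have : n ≠ 1 := fun h => h1K (h ▸ hn.2)
    omega
  have hMg : M.gcd id = 1 := by
    have hdvd : M.gcd id ∣ Kfin.gcd id := by
      apply Finset.dvd_gcd
      intro k hk
      rcases Nat.eq_zero_or_pos k with rfl | hpos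
      · exact dvd_zero _
      · exact Finset.gcd_dvd (by rw [hM, Finset.mem_erase]; exact ⟨by omega, hk⟩)
    rw [hgcd1] at hdvd
    exact Nat.dvd_one.mp hdvd
  have hMS : ∀ n ∈ M, List.replicate n i ∈ S := by
    intro n hn
    rw [hM, Finset.mem_erase] at hn
    exact (hmemK n).mp hn.2
  have hcard : 2 ≤ M.card := by
    by_contra hc
    push_neg at hc
    interval_cases hMc : M.card
    · rw [Finset.card_eq_zero] at hMc
      rw [hMc] at hMg
      simp at hMg
    · obtain ⟨m, hm⟩ := Finset.card_eq_one.mp hMc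
      have : 2 ≤ m := hM2 m (by rw [hm]; exact Finset.mem_singleton_self m)
      rw [hm] at hMg
      simp at hMg
      omega
  -- mixed words
  have hjab : ∀ j : Fin q, ∃ A B : ℕ, j ≠ i →
      (1 ≤ A ∧ 1 ≤ B ∧ (i :: List.replicate A j) ∈ S ∧ (List.replicate B j ++ [i]) ∈ S) := by
    intro j
    by_cases hji : j = i
    · exact ⟨0, 0, fun h => absurd hji h⟩
    have hji' : i ≠ j := Ne.symm hji
    -- word i :: j^(L+1)
    have hw₁ : IterShuffle S (i :: List.replicate (L + 1) j) := hL _ (by simp)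
    obtain ⟨u, huS, husub, hiu⟩ := mem_word hw₁ (List.mem_cons_self)
    have hA : ∃ A, 1 ≤ A ∧ (i :: List.replicate A j) ∈ S := by
      rcases List.sublist_cons_iff.mp husub with hcase | ⟨r, rfl, hr⟩
      · obtain ⟨t, _, rfl⟩ := List.sublist_replicate_iff.mp hcase
        exact absurd (List.eq_of_mem_replicate hiu) hji'
      · obtain ⟨t, _, rfl⟩ := List.sublist_replicate_iff.mp hr
        match t with
        | 0 => exact absurd huS (by simpa using hi)
        | t + 1 => exact ⟨t + 1, by omega, huS⟩
    -- word j^(L+1) ++ [i]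
    have hw₂ : IterShuffle S (List.replicate (L + 1) j ++ [i]) := hL _ (by simp)
    obtain ⟨u₂, hu₂S, hu₂sub, hiu₂⟩ := mem_word hw₂
      (List.mem_append_right _ (List.mem_singleton.mpr rfl))
    have hB : ∃ B, 1 ≤ B ∧ (List.replicate B j ++ [i]) ∈ S := by
      obtain ⟨u₂₁, u₂₂, rfl, hs1, hs2⟩ := List.sublist_append_iff.mp hu₂sub
      obtain ⟨s, _, rfl⟩ := List.sublist_replicate_iff.mp hs1
      rcases List.sublist_singleton.mp hs2 with rfl | rfl
      · rw [List.append_nil] at hiu₂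
        exact absurd (List.eq_of_mem_replicate hiu₂) hji'
      · match s with
        | 0 => exact absurd hu₂S (by simpa using hi)
        | s + 1 => exact ⟨s + 1, by omega, hu₂S⟩
    obtain ⟨A, hA1, hA2⟩ := hA
    obtain ⟨B, hB1, hB2⟩ := hB
    exact ⟨A, B, fun _ => ⟨hA1, hB1, hA2, hB2⟩⟩
  choose A B hAB using hjab
  exact ⟨M, A, B, hcard, hM2, hMg, hMS, fun j hj => hAB j hj⟩

end Aux

/-- **Theorem (characterization of co-finiteness).**
For `q ≥ 1` and a finite set `S` of words over the alphabet `{x₁, …, x_q}`,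
the iterated shuffle `S^†` is co-finite if and only if for each `i` the
collection `𝒯ᵢ` is non-empty. -/
theorem cofinite_iff_Ti_nonempty (q : ℕ) (hq : 1 ≤ q)
    (S : Set (List (Fin q))) (hS : S.Finite) :
    {w : List (Fin q) | ¬ IterShuffle S w}.Finite ↔ ∀ i : Fin q, TiNonempty S i := by
  exact ⟨main_mp hS, main_mpr hq⟩
end

section
/- Let q ≥ 1 and let S be a finite set of words over the alphabet Σ = {x_1, …, x_q} such that S^† is co-finite. Then |S| ≥ q. -/
lemma shuffle_mem {α : Type*} {u v w : List α} (h : Shuffle u v w) :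
    ∀ c ∈ u, c ∈ w := by
  induction h with
  | nil => simp
  | left _ ih =>
    intro c hc
    rcases List.mem_cons.mp hc with h | h
    · simp [h]
    · exact List.mem_cons_of_mem _ (ih c h)
  | right _ ih => exact fun c hc => List.mem_cons_of_mem _ (ih c hc)

lemma shuffle_nil_left_s4 {α : Type*} {u v w : List α} (h : Shuffle u v w) (hu : u = []) :
    v = w := by
  induction h with
  | nil => rfl
  | left _ _ => simp at hu
  | right _ ih => simp [ih hu]

lemma iter_nonempty {α : Type*} {S : Set (List α)} {y : List α}
    (h : IterShuffle S y) (hy : y ≠ []) :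
    ∃ u ∈ S, u ≠ [] ∧ ∀ c ∈ u, c ∈ y := by
  induction h with
  | nil => exact absurd rfl hy
  | @step u w y hu hw hsh ih =>
    by_cases hue : u = []
    · have hwy : w = y := shuffle_nil_left_s4 hsh hue
      subst hwy
      exact ih hy
    · exact ⟨u, hu, hue, fun c hc => shuffle_mem hsh c hc⟩

/-- If `q ≥ 1` and `S` is a finite set of words over a `q`-letter alphabet such
that `S^†` is co-finite, then `|S| ≥ q`. -/
theorem card_ge_q (q : ℕ) (hq : 1 ≤ q)
    (S : Set (List (Fin q))) (hS : S.Finite)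
    (hcof : {w : List (Fin q) | ¬ IterShuffle S w}.Finite) :
    q ≤ S.ncard := by
  classical
  set N := (hcof.toFinset.sup fun l => l.length) + 1 with hN
  have key : ∀ a : Fin q, ∃ u ∈ S, u ≠ [] ∧ ∀ c ∈ u, c = a := by
    intro a
    have hmem : IterShuffle S (List.replicate N a) := by
      by_contra h
      have hT : List.replicate N a ∈ hcof.toFinset := hcof.mem_toFinset.mpr h
      have := Finset.le_sup (f := fun l : List (Fin q) => l.length) hT
      simp only [List.length_replicate] at this
      omega
    have hne : List.replicate N a ≠ [] := by
      simp [← List.length_pos_iff_ne_nil, hN]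
    obtain ⟨u, huS, hune, hmemy⟩ := iter_nonempty hmem hne
    exact ⟨u, huS, hune, fun c hc => List.eq_of_mem_replicate (hmemy c hc)⟩
  choose f hfS hfne hfa using key
  have hinj : Function.Injective f := by
    intro a b hab
    obtain ⟨c, hc⟩ := List.exists_mem_of_ne_nil (f a) (hfne a)
    have h1 : c = a := hfa a c hc
    have h2 : c = b := hfa b c (hab ▸ hc)
    exact h1 ▸ h2
  have : Finite ↥S := hS.to_subtype
  have hinj' : Function.Injective (fun a : Fin q => (⟨f a, hfS a⟩ : S)) := by
    intro a b hab
    exact hinj (congrArg Subtype.val hab)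
  calc q = Nat.card (Fin q) := by simp
    _ ≤ Nat.card ↥S := Nat.card_le_card_of_injective _ hinj'
    _ = S.ncard := Nat.card_coe_set_eq S
end

section
/- Let q ≥ 1 and let S be a finite set of words over the alphabet Σ = {x_1, …, x_q} such that S^† is co-finite. If the length of a shortest word in S is 2, then |S| ≥ q² + q. -/
theorem Shuffle.perm_aux {α : Type*} {u v w : List α} (h : Shuffle u v w) :
    (u ++ v).Perm w := by
  induction h with
  | nil => simp
  | @left b u' v' w' h ih => simpa using ih.cons b
  | @right b u' v' w' h ih => exact List.perm_middle.trans (ih.cons b)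

theorem Shuffle.sublist_left_aux {α : Type*} {u v w : List α} (h : Shuffle u v w) :
    u.Sublist w := by
  induction h with
  | nil => exact List.Sublist.refl _
  | left h ih => exact ih.cons₂ _
  | right h ih => exact ih.cons _

theorem Shuffle.sublist_right_aux {α : Type*} {u v w : List α} (h : Shuffle u v w) :
    v.Sublist w := by
  induction h with
  | nil => exact List.Sublist.refl _
  | left h ih => exact ih.cons _
  | right h ih => exact ih.cons₂ _

theorem iterShuffle_count {α : Type*} [DecidableEq α] {S : Set (List α)} {b : α}
    {y : List α} (h : IterShuffle S y) (hb : 0 < y.count b) :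
    ∃ u ∈ S, u.Sublist y ∧ 0 < u.count b := by
  induction h with
  | nil => simp at hb
  | @step u w y hu hw hs ih =>
    have hc : u.count b + w.count b = y.count b := by
      have := hs.perm_aux.count_eq b
      simpa [List.count_append] using this
    by_cases h1 : 0 < u.count b
    · exact ⟨u, hu, hs.sublist_left_aux, h1⟩
    · obtain ⟨u', hu', hsub, hcnt⟩ := ih (by omega)
      exact ⟨u', hu', hsub.trans hs.sublist_right_aux, hcnt⟩

theorem iterShuffle_pure {α : Type*} {S : Set (List α)} {a : α} {k : ℕ}
    (hk : ∀ u ∈ S, (∀ c ∈ u, c = a) → k ∣ u.length) :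
    ∀ {y : List α}, IterShuffle S y → (∀ c ∈ y, c = a) → k ∣ y.length := by
  intro y h
  induction h with
  | nil => simp
  | @step u w y hu hw hs ih =>
    intro hall
    have hlen : u.length + w.length = y.length := by
      have := hs.perm_aux.length_eq
      simpa using this
    have hu' : ∀ c ∈ u, c = a := fun c hc => hall c (hs.sublist_left_aux.subset hc)
    have hw' : ∀ c ∈ w, c = a := fun c hc => hall c (hs.sublist_right_aux.subset hc)
    have h1 := hk u hu hu'
    have h2 := ih hw'
    rw [← hlen]
    exact Nat.dvd_add h1 h2

/-- If `q ≥ 1`, `S` is a finite set of words over a `q`-letter alphabet such that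
`S^†` is co-finite, and the length of a shortest word of `S` is `2`, then
`|S| ≥ q ^ 2 + q`. -/
theorem card_ge_of_min_two (q : ℕ) (hq : 1 ≤ q)
    (S : Set (List (Fin q))) (hS : S.Finite)
    (hcof : {w : List (Fin q) | ¬ IterShuffle S w}.Finite)
    (hmem : ∃ w ∈ S, w.length = 2) (hmin : ∀ w ∈ S, 2 ≤ w.length) :
    q ^ 2 + q ≤ S.ncard := by
  classical
  -- For any injective sequence of words, some member is in `S^†`.
  have key : ∀ f : ℕ → List (Fin q), Function.Injective f →
      ∃ n, IterShuffle S (f n) := by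
    intro f hf
    have hfin : (f ⁻¹' {w | ¬ IterShuffle S w}).Finite :=
      hcof.preimage (hf.injOn)
    obtain ⟨n, hn⟩ := hfin.infinite_compl.nonempty
    exact ⟨n, not_not.mp hn⟩
  -- Witnesses for each ordered pair of distinct letters.
  have W1 : ∀ a b : Fin q, a ≠ b → ∃ w ∈ S, ∃ i, 1 ≤ i ∧
      w = List.replicate i a ++ [b] := by
    intro a b hab
    obtain ⟨n, hn⟩ := key (fun n => List.replicate n a ++ [b]) (by
      intro m n h
      have := congrArg List.length h
      simpa using this)
    have hcount : 0 < (List.replicate n a ++ [b]).count b := by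
      simp [List.count_append]
    obtain ⟨u, hu, hsub, hcnt⟩ := iterShuffle_count hn hcount
    rw [List.sublist_append_iff] at hsub
    obtain ⟨l₁, l₂, hu_eq, h₁, h₂⟩ := hsub
    obtain ⟨i, -, hl₁⟩ := List.sublist_replicate_iff.mp h₁
    rcases List.sublist_cons_iff.mp h₂ with h₂' | ⟨r, hr, hr'⟩
    · -- l₂ = [] : contradiction with count b
      rw [List.sublist_nil] at h₂'
      subst h₂'
      rw [List.append_nil] at hu_eq
      rw [hu_eq, hl₁, List.count_replicate] at hcnt
      split at hcnt
      · simp_all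
      · simp at hcnt
    · -- l₂ = b :: r with r <+ []
      rw [List.sublist_nil] at hr'
      subst hr'
      refine ⟨u, hu, i, ?_, by rw [hu_eq, hl₁, hr]⟩
      have hlen := hmin u hu
      rw [hu_eq, hl₁, hr] at hlen
      simp at hlen
      omega
  -- Witnesses: two distinct pure powers of each letter.
  have W2 : ∀ a : Fin q, ∃ w₁ ∈ S, ∃ w₂ ∈ S, w₁ ≠ w₂ ∧
      (∀ c ∈ w₁, c = a) ∧ (∀ c ∈ w₂, c = a) := by
    intro a
    by_contra hcon
    push_neg at hcon
    -- there is some k ≥ 2 with: every pure-a word of S has length divisible by k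
    have hdvd : ∃ k, 2 ≤ k ∧ ∀ u ∈ S, (∀ c ∈ u, c = a) → k ∣ u.length := by
      by_cases hP : ∃ u ∈ S, ∀ c ∈ u, c = a
      · obtain ⟨u₀, hu₀, hpure₀⟩ := hP
        refine ⟨u₀.length, hmin u₀ hu₀, ?_⟩
        intro u hu hpure
        have : u = u₀ := by
          by_contra hne
          obtain ⟨c, hc, hca⟩ := hcon u hu u₀ hu₀ hne hpure
          exact hca (hpure₀ c hc)
        rw [this]
      · push_neg at hP
        refine ⟨2, le_refl _, fun u hu hpure => ?_⟩
        obtain ⟨c, hc, hca⟩ := hP u hu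
        exact absurd (hpure c hc) hca
    obtain ⟨k, hk2, hk⟩ := hdvd
    have hall : ∀ n, IterShuffle S (List.replicate n a) → k ∣ n := by
      intro n hn
      have := iterShuffle_pure hk hn (fun c hc => List.eq_of_mem_replicate hc)
      simpa using this
    have hinf : {w : List (Fin q) | ¬ IterShuffle S w}.Infinite := by
      refine Set.infinite_of_injective_forall_mem
        (f := fun m : ℕ => List.replicate (k * m + 1) a) ?_ ?_
      · intro m n h
        have := congrArg List.length h
        simp at this
        omega
      · intro m
        intro hIter
        have hd := hall _ hIter
        have h1 : k ∣ 1 := (Nat.dvd_add_right ⟨m, rfl⟩).mp hd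
        have := Nat.le_of_dvd one_pos h1
        omega
    exact hinf hcof
  -- Now count.
  have hqz : NeZero q := ⟨by omega⟩
  set T := hS.toFinset with hT
  set f : List (Fin q) → Option (Fin q) × Option (Fin q) :=
    fun w => (w.head?, w.getLast?) with hf
  have hfib : T.card = ∑ p ∈ (Finset.univ : Finset (Option (Fin q) × Option (Fin q))),
      (T.filter fun w => f w = p).card :=
    Finset.card_eq_sum_card_fiberwise (fun x _ => Finset.mem_univ _)
  set g : Fin q × Fin q → Option (Fin q) × Option (Fin q) :=
    fun p => (some p.1, some p.2) with hg
  have hginj : ∀ x ∈ (Finset.univ : Finset (Fin q × Fin q)), ∀ y ∈ Finset.univ,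
      g x = g y → x = y := by
    intro x _ y _ h
    simpa [hg, Prod.ext_iff] using h
  have himg : ∑ p ∈ Finset.univ.image g, (T.filter fun w => f w = p).card
      = ∑ p : Fin q × Fin q, (T.filter fun w => f w = g p).card :=
    Finset.sum_image hginj
  have hsub : ∑ p ∈ Finset.univ.image g, (T.filter fun w => f w = p).card
      ≤ ∑ p ∈ (Finset.univ : Finset (Option (Fin q) × Option (Fin q))),
        (T.filter fun w => f w = p).card :=
    Finset.sum_le_sum_of_subset (Finset.subset_univ _)
  -- lower bound each fiber
  have hfiber : ∀ p : Fin q × Fin q,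
      (if p.1 = p.2 then 2 else 1) ≤ (T.filter fun w => f w = g p).card := by
    rintro ⟨a, b⟩
    by_cases hab : a = b
    · subst hab
      simp only [if_pos rfl]
      obtain ⟨w₁, hw₁, w₂, hw₂, hne, hpure₁, hpure₂⟩ := W2 a
      have hmemfib : ∀ w ∈ S, (∀ c ∈ w, c = a) →
          w ∈ T.filter fun w => f w = g (a, a) := by
        intro w hw hpure
        have hlen := hmin w hw
        have hrep : w = List.replicate w.length a := List.eq_replicate_of_mem hpure
        rw [Finset.mem_filter]
        refine ⟨by simpa [hT] using hw, ?_⟩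
        have h1 : w.head? = some a := by
          rw [hrep]
          cases hn : w.length with
          | zero => omega
          | succ m => simp [List.replicate_succ]
        have h2 : w.getLast? = some a := by
          rw [hrep]
          cases hn : w.length with
          | zero => omega
          | succ m => rw [List.replicate_succ']; exact List.getLast?_concat
        simp [hf, hg, h1, h2]
      refine Finset.one_lt_card.mpr ⟨w₁, hmemfib w₁ hw₁ hpure₁, w₂, hmemfib w₂ hw₂ hpure₂, hne⟩
    · simp only [if_neg hab]
      obtain ⟨w, hw, i, hi, hweq⟩ := W1 a b hab
      refine Finset.card_pos.mpr ⟨w, ?_⟩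
      rw [Finset.mem_filter]
      refine ⟨by simpa [hT] using hw, ?_⟩
      have h1 : w.head? = some a := by
        rw [hweq]
        obtain ⟨j, rfl⟩ : ∃ j, i = j + 1 := ⟨i - 1, by omega⟩
        simp [List.replicate_succ]
      have h2 : w.getLast? = some b := by
        rw [hweq]
        exact List.getLast?_concat
      simp [hf, hg, h1, h2]
  -- combine
  have hsum : (q ^ 2 + q : ℕ) = ∑ p : Fin q × Fin q, (if p.1 = p.2 then 2 else 1) := by
    rw [Fintype.sum_prod_type]
    have : ∀ a : Fin q, (∑ b : Fin q, if a = b then (2:ℕ) else 1) = q + 1 := by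
      intro a
      have : ∀ b : Fin q, (if a = b then (2:ℕ) else 1) = (if a = b then 1 else 0) + 1 := by
        intro b; by_cases h : a = b <;> simp [h]
      rw [Finset.sum_congr rfl (fun b _ => this b), Finset.sum_add_distrib]
      simp [Finset.sum_ite_eq]
      omega
    rw [Finset.sum_congr rfl (fun a _ => this a)]
    simp
    ring
  have hcard : S.ncard = T.card := Set.ncard_eq_toFinset_card S hS
  rw [hcard, hfib]
  calc q ^ 2 + q = ∑ p : Fin q × Fin q, (if p.1 = p.2 then 2 else 1) := hsum
    _ ≤ ∑ p : Fin q × Fin q, (T.filter fun w => f w = g p).card :=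
        Finset.sum_le_sum (fun p _ => hfiber p)
    _ = ∑ p ∈ Finset.univ.image g, (T.filter fun w => f w = p).card := himg.symm
    _ ≤ _ := hsub
end

section
/- Let q ≥ 1, let Σ = {x_1, …, x_q}, and let S = ⋃_{i=1}^q {x_i², x_i³} ∪ ⋃_{i ≠ j} {x_i x_j} (the prototypical set with m = 2). Then the length of a longest word over Σ not in S^† is exactly 2q − 1: the word x_1² x_2² ⋯ x_{q−1}² x_q is not in S^†, and every word over Σ of length at least 2q is in S^†. -/
namespace ProtoAux

variable {α : Type*}

lemma shuffle_coe {u v w : List α} (h : Shuffle u v w) :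
    (↑w : Multiset α) = ↑u + ↑v := by
  induction h with
  | nil => simp
  | @left a u v w h ih =>
      show (↑(a :: w) : Multiset α) = ↑(a :: u) + ↑v
      rw [← Multiset.cons_coe, ih, ← Multiset.cons_coe, Multiset.cons_add]
  | @right a u v w h ih =>
      show (↑(a :: w) : Multiset α) = ↑u + ↑(a :: v)
      rw [← Multiset.cons_coe, ih, ← Multiset.cons_coe,
        add_comm (↑u : Multiset α) (↑v), ← Multiset.cons_add, add_comm]

lemma exists_shuffle_of_le [DecidableEq α] :
    ∀ (w : List α) (t : Multiset α), t ≤ ↑w →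
      ∃ u v : List α, (↑u : Multiset α) = t ∧ (↑v : Multiset α) = ↑w - t ∧ Shuffle u v w
  | [], t, ht => by
      have h0 : t = 0 := Multiset.le_zero.mp (by simpa using ht)
      exact ⟨[], [], by simp [h0], by simp [h0], .nil⟩
  | a :: w, t, ht => by
      have hc : (↑(a :: w) : Multiset α) = a ::ₘ ↑w := by simp
      by_cases ha : a ∈ t
      · have h1 : t.erase a ≤ ↑w := by
          rw [Multiset.erase_le_iff_le_cons, ← hc]; exact ht
        obtain ⟨u, v, hu, hv, hs⟩ := exists_shuffle_of_le w (t.erase a) h1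
        refine ⟨a :: u, v, ?_, ?_, .left hs⟩
        · rw [← Multiset.cons_coe, hu, Multiset.cons_erase ha]
        · rw [hv, hc]
          ext x
          by_cases hx : x = a <;>
            simp [hx, Multiset.count_sub, Multiset.count_cons, Multiset.count_erase_self,
              Multiset.count_erase_of_ne]
          · have := Multiset.count_pos.mpr ha
            omega
          · simp [List.count_cons, hx, Ne.symm hx]
      · have h1 : t ≤ ↑w := by
          rw [Multiset.le_iff_count] at ht ⊢
          intro x
          have := ht x
          rw [hc] at this
          by_cases hx : x = a
          · subst hx
            have : Multiset.count x t = 0 := Multiset.count_eq_zero.mpr ha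
            omega
          · rwa [Multiset.count_cons_of_ne hx] at this
        obtain ⟨u, v, hu, hv, hs⟩ := exists_shuffle_of_le w t h1
        refine ⟨u, a :: v, hu, ?_, .right hs⟩
        rw [← Multiset.cons_coe, hv, hc]
        ext x
        by_cases hx : x = a <;>
          simp [hx, Multiset.count_sub, Multiset.count_cons]
        · have : Multiset.count a t = 0 := Multiset.count_eq_zero.mpr ha
          omega
        · simp [List.count_cons, hx, Ne.symm hx]

lemma iter_decomp {S : Set (List α)} {w : List α} (h : IterShuffle S w) :
    ∃ l : List (List α), (∀ u ∈ l, u ∈ S) ∧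
      (↑w : Multiset α) = (l.map Multiset.ofList).sum := by
  induction h with
  | nil => exact ⟨[], by simp, by simp⟩
  | @step u w y hu _ hsh ih =>
      obtain ⟨l, hl, hsum⟩ := ih
      exact ⟨u :: l, by simpa using ⟨hu, hl⟩, by
        rw [shuffle_coe hsh, hsum]; simp⟩

lemma iter_of_decomp [DecidableEq α] {S : Set (List α)}
    (hperm : ∀ u v : List α, (↑u : Multiset α) = ↑v → v ∈ S → u ∈ S) :
    ∀ (l : List (List α)), (∀ u ∈ l, u ∈ S) → ∀ w : List α,
      (↑w : Multiset α) = (l.map Multiset.ofList).sum → IterShuffle S w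
  | [], _, w, hw => by
      have : w = [] := by
        have hw2 : (↑w : Multiset α) = 0 := by rw [hw]; rfl
        exact (Multiset.coe_eq_zero w).mp hw2
      exact this ▸ .nil
  | u :: l, hl, w, hw => by
      rw [List.map_cons, List.sum_cons] at hw
      have h1 : (↑u : Multiset α) ≤ ↑w := by rw [hw]; exact Multiset.le_add_right _ _
      obtain ⟨u', v, hu', hv, hs⟩ := exists_shuffle_of_le w ↑u h1
      have huS : u' ∈ S := hperm u' u hu' (hl u (by simp))
      have hvsum : (↑v : Multiset α) = (l.map Multiset.ofList).sum := by
        rw [hv, hw, add_tsub_cancel_left]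
      exact .step huS (iter_of_decomp hperm l (fun x hx => hl x (by simp [hx])) v hvsum) hs

lemma list_sum_map_add {β : Type*} (L : List β) (f g : β → ℕ) :
    (L.map (fun b => f b + g b)).sum = (L.map f).sum + (L.map g).sum := by
  induction L with
  | nil => simp
  | cons b L ih => simp [ih]; ring

lemma sum_zero_or_two_le (L : List ℕ) (h : ∀ x ∈ L, x = 0 ∨ 2 ≤ x) :
    L.sum = 0 ∨ 2 ≤ L.sum := by
  induction L with
  | nil => simp
  | cons b L ih =>
      have hb := h b (by simp)
      have h2 := ih (fun x hx => h x (by simp [hx]))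
      simp only [List.sum_cons]
      omega

lemma sum_count_eq_card [Fintype α] [DecidableEq α] (m : Multiset α) :
    ∑ a : α, Multiset.count a m = Multiset.card m := by
  induction m using Multiset.induction with
  | empty => simp
  | cons a s ih =>
      simp only [Multiset.count_cons, Finset.sum_add_distrib, ih, Multiset.card_cons]
      congr 1
      simp

lemma finset_list_swap {β : Type*} [Fintype α] (L : List β) (f : β → α → ℕ) :
    ∑ a : α, (L.map (fun g => f g a)).sum = (L.map (fun g => ∑ a : α, f g a)).sum := by
  induction L with
  | nil => simp
  | cons g L ih => simp [Finset.sum_add_distrib, ih]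

variable {q : ℕ}

def PairP (g : Multiset (Fin q)) : Prop := ∃ i j : Fin q, i ≠ j ∧ g = {i, j}

instance : DecidablePred (PairP (q := q)) := fun g => by unfold PairP; infer_instance

def Gen (g : Multiset (Fin q)) : Prop :=
  (∃ i : Fin q, g = Multiset.replicate 2 i ∨ g = Multiset.replicate 3 i) ∨ PairP g

lemma parity_core (hq : 1 ≤ q) (L : List (Multiset (Fin q)))
    (hG : ∀ g ∈ L, Gen g)
    (hsum : ∀ a : Fin q, (L.map (fun g => Multiset.count a g)).sum
        = if (a : ℕ) < q - 1 then 2 else 1) : False := by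
  classical
  set z : Fin q := ⟨q - 1, by omega⟩ with hz
  set pc : Multiset (Fin q) → Fin q → ℕ :=
    fun g a => if PairP g then Multiset.count a g else 0 with hpc
  set sc : Multiset (Fin q) → Fin q → ℕ :=
    fun g a => if PairP g then 0 else Multiset.count a g with hsc
  have hsplit : ∀ a : Fin q, (L.map (fun g => pc g a)).sum + (L.map (fun g => sc g a)).sum
      = if (a : ℕ) < q - 1 then 2 else 1 := by
    intro a
    rw [← list_sum_map_add]
    rw [← hsum a]
    congr 1
    exact List.map_congr_left (fun g _ => by by_cases h : PairP g <;> simp [hpc, hsc, h])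
  have hscz : ∀ a : Fin q, ∀ g ∈ L, sc g a = 0 ∨ 2 ≤ sc g a := by
    intro a g hg
    by_cases h : PairP g
    · left; simp [hsc, h]
    · rcases hG g hg with ⟨i, hi | hi⟩ | hp
      · subst hi
        simp only [hsc, if_neg h, Multiset.count_replicate]
        rcases eq_or_ne a i with ha | ha
        · subst ha; right; simp
        · left; simp [ha, Ne.symm ha]
      · subst hi
        simp only [hsc, if_neg h, Multiset.count_replicate]
        rcases eq_or_ne a i with ha | ha
        · subst ha; right; simp
        · left; simp [ha, Ne.symm ha]
      · exact absurd hp h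
  have hSsum : ∀ a : Fin q, (L.map (fun g => sc g a)).sum = 0 ∨
      2 ≤ (L.map (fun g => sc g a)).sum := by
    intro a
    apply sum_zero_or_two_le
    intro x hx
    simp only [List.mem_map] at hx
    obtain ⟨g, hg, rfl⟩ := hx
    exact hscz a g hg
  have hzval : ¬ ((z : ℕ) < q - 1) := by simp [hz]
  have hPz : (L.map (fun g => pc g z)).sum = 1 := by
    have h1 := hsplit z
    rw [if_neg hzval] at h1
    rcases hSsum z with h | h <;> omega
  have hPev : ∀ a : Fin q, a ≠ z → 2 ∣ (L.map (fun g => pc g a)).sum := by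
    intro a ha
    have hav : (a : ℕ) < q - 1 := by
      have h1 : (a : ℕ) < q := a.isLt
      have h2 : (a : ℕ) ≠ q - 1 := fun hc => ha (Fin.ext (by simp [hz, hc]))
      omega
    have h1 := hsplit a
    rw [if_pos hav] at h1
    rcases hSsum a with h | h <;> omega
  have hT : ∑ a : Fin q, (L.map (fun g => pc g a)).sum
      = (L.map (fun g => pc g z)).sum
        + ∑ a ∈ Finset.univ.erase z, (L.map (fun g => pc g a)).sum := by
    rw [← Finset.add_sum_erase _ _ (Finset.mem_univ z)]
  have hTodd : ¬ (2 ∣ ∑ a : Fin q, (L.map (fun g => pc g a)).sum) := by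
    rw [hT, hPz]
    have h2 : 2 ∣ ∑ a ∈ Finset.univ.erase z, (L.map (fun g => pc g a)).sum :=
      Finset.dvd_sum (fun a ha => hPev a (Finset.ne_of_mem_erase ha))
    omega
  have hTev : 2 ∣ ∑ a : Fin q, (L.map (fun g => pc g a)).sum := by
    rw [finset_list_swap]
    apply List.dvd_sum
    intro x hx
    simp only [List.mem_map] at hx
    obtain ⟨g, hg, rfl⟩ := hx
    by_cases h : PairP g
    · obtain ⟨i, j, hij, rfl⟩ := h
      have : ∑ a : Fin q, pc ({i, j} : Multiset (Fin q)) a = 2 := by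
        have hpp : PairP ({i, j} : Multiset (Fin q)) := ⟨i, j, hij, rfl⟩
        simp only [hpc, if_pos hpp]
        rw [sum_count_eq_card]
        simp
      rw [this]
    · have h0 : ∑ a : Fin q, pc g a = 0 := by
        simp [hpc, if_neg h]
      rw [h0]
      exact dvd_zero 2
  exact hTodd hTev

def Sdef (q : ℕ) : Set (List (Fin q)) :=
  {w | ∃ i : Fin q, w = List.replicate 2 i ∨ w = List.replicate 3 i} ∪
    {w | ∃ i j : Fin q, i ≠ j ∧ w = [i, j]}

def Decomp (m : Multiset (Fin q)) : Prop :=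
  ∃ l : List (List (Fin q)), (∀ u ∈ l, u ∈ Sdef q) ∧ (l.map Multiset.ofList).sum = m

lemma decomp_zero : Decomp (0 : Multiset (Fin q)) := ⟨[], by simp, by simp⟩

lemma decomp_add {m₁ m₂ : Multiset (Fin q)} (h₁ : Decomp m₁) (h₂ : Decomp m₂) :
    Decomp (m₁ + m₂) := by
  obtain ⟨l₁, hl₁, hs₁⟩ := h₁
  obtain ⟨l₂, hl₂, hs₂⟩ := h₂
  refine ⟨l₁ ++ l₂, ?_, by simp [hs₁, hs₂]⟩
  intro u hu
  rcases List.mem_append.mp hu with h | h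
  exacts [hl₁ u h, hl₂ u h]

lemma decomp_mem {u : List (Fin q)} (h : u ∈ Sdef q) : Decomp (↑u : Multiset (Fin q)) :=
  ⟨[u], by simpa using h,
    by rw [List.map_cons, List.map_nil, List.sum_cons, List.sum_nil, add_zero]⟩

lemma decomp_replicate (i : Fin q) : ∀ n : ℕ, n ≠ 1 → Decomp (Multiset.replicate n i)
  | 0, _ => by simpa using decomp_zero
  | 1, h => absurd rfl h
  | 2, _ => by
      rw [← Multiset.coe_replicate]
      exact decomp_mem (Or.inl ⟨i, Or.inl rfl⟩)
  | 3, _ => by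
      rw [← Multiset.coe_replicate]
      exact decomp_mem (Or.inl ⟨i, Or.inr rfl⟩)
  | (n+4), _ => by
      have h1 : Decomp (Multiset.replicate 2 i) := by
        rw [← Multiset.coe_replicate]
        exact decomp_mem (Or.inl ⟨i, Or.inl rfl⟩)
      have h2 : Decomp (Multiset.replicate (n+2) i) := decomp_replicate i (n+2) (by omega)
      have h3 : n + 4 = 2 + (n + 2) := by omega
      rw [h3, Multiset.replicate_add]
      exact decomp_add h1 h2

def K (m : Multiset (Fin q)) : ℕ :=
  (Finset.univ.filter fun a => Multiset.count a m = 1).card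

lemma decomp_of_K0 {m : Multiset (Fin q)} (h : ∀ a : Fin q, Multiset.count a m ≠ 1) :
    Decomp m := by
  classical
  rw [← Multiset.toFinset_sum_count_nsmul_eq m]
  apply Finset.sum_induction _ Decomp (fun a b => decomp_add) decomp_zero
  intro a _
  rw [Multiset.nsmul_singleton]
  exact decomp_replicate a _ (h a)

lemma decomp_pair {a b : Fin q} (hab : a ≠ b) : Decomp ({a, b} : Multiset (Fin q)) := by
  have h : ({a, b} : Multiset (Fin q)) = ↑([a, b] : List (Fin q)) := rfl
  rw [h]
  exact decomp_mem (Or.inr ⟨a, b, hab, rfl⟩)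

lemma count_pair (x a b : Fin q) :
    Multiset.count x ({a, b} : Multiset (Fin q)) =
      (if x = a then 1 else 0) + (if x = b then 1 else 0) := by
  rw [Multiset.insert_eq_cons, Multiset.count_cons, Multiset.count_singleton]
  by_cases h1 : x = a <;> by_cases h2 : x = b <;> simp [h1, h2] <;> exact add_comm _ _

lemma main_decomp (m : Multiset (Fin q))
    (hC : Odd (K m) → ∃ b : Fin q, 3 ≤ Multiset.count b m) : Decomp m := by
  classical
  induction m using Multiset.strongInductionOn with
  | _ m IH =>
  by_cases h0 : ∀ a : Fin q, Multiset.count a m ≠ 1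
  · exact decomp_of_K0 h0
  push_neg at h0
  obtain ⟨a, ha⟩ := h0
  have haf : a ∈ Finset.univ.filter fun x => Multiset.count x m = 1 := by
    simp [ha]
  have hK1 : 1 ≤ K m := Finset.card_pos.mpr ⟨a, haf⟩
  obtain ⟨b, hba, hb⟩ : ∃ b : Fin q, b ≠ a ∧
      ((Even (K m) ∧ Multiset.count b m = 1) ∨ (Odd (K m) ∧ 3 ≤ Multiset.count b m)) := by
    rcases Nat.even_or_odd (K m) with hev | hod
    · have h2 := Nat.even_iff.mp hev
      have hK2 : 2 ≤ K m := by omega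
      have hne : ((Finset.univ.filter fun x => Multiset.count x m = 1).erase a).Nonempty := by
        apply Finset.card_pos.mp
        rw [Finset.card_erase_of_mem haf]
        have : K m = (Finset.univ.filter fun x => Multiset.count x m = 1).card := rfl
        omega
      obtain ⟨b, hbmem⟩ := hne
      refine ⟨b, Finset.ne_of_mem_erase hbmem, Or.inl ⟨hev, ?_⟩⟩
      have := Finset.mem_of_mem_erase hbmem
      simpa using this
    · obtain ⟨b, hb3⟩ := hC hod
      refine ⟨b, ?_, Or.inr ⟨hod, hb3⟩⟩
      intro hc; rw [hc, ha] at hb3; omega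
  have hbcount : 1 ≤ Multiset.count b m := by rcases hb with ⟨_, h⟩ | ⟨_, h⟩ <;> omega
  have hbne2 : Multiset.count b m = 1 ∨ 3 ≤ Multiset.count b m := by
    rcases hb with ⟨_, h⟩ | ⟨_, h⟩
    exacts [Or.inl h, Or.inr h]
  have hle : ({a, b} : Multiset (Fin q)) ≤ m := by
    rw [Multiset.le_iff_count]
    intro x
    rw [count_pair]
    rcases eq_or_ne x a with rfl | h1
    · rw [if_pos rfl, if_neg (fun hc => hba hc.symm), ha]
    · rw [if_neg h1]
      rcases eq_or_ne x b with rfl | h2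
      · rw [if_pos rfl]; omega
      · rw [if_neg h2]; omega
  set m' := m - {a, b} with hm'
  have hmeq : m = {a, b} + m' := (add_tsub_cancel_of_le hle).symm
  have hcnt : ∀ x : Fin q, Multiset.count x m' =
      Multiset.count x m - ((if x = a then 1 else 0) + (if x = b then 1 else 0)) := by
    intro x
    rw [hm', Multiset.count_sub, count_pair]
  have hlt : m' < m := by
    apply lt_of_le_of_ne (hm' ▸ Multiset.sub_le_self m {a, b})
    intro hc
    have h1 := hcnt a
    rw [hc, if_pos rfl, ha] at h1
    omega
  have hfilter : (Finset.univ.filter fun x => Multiset.count x m' = 1)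
      = ((Finset.univ.filter fun x => Multiset.count x m = 1).erase a).erase b := by
    ext x
    simp only [Finset.mem_erase, Finset.mem_filter, Finset.mem_univ, true_and]
    rw [hcnt x]
    constructor
    · intro hx
      by_cases h1 : x = a
      · subst h1; rw [if_pos rfl, ha] at hx; omega
      by_cases h2 : x = b
      · subst h2; rw [if_neg h1, if_pos rfl] at hx; omega
      · rw [if_neg h1, if_neg h2] at hx
        exact ⟨h2, h1, by omega⟩
    · rintro ⟨hxb, hxa, hx1⟩
      rw [if_neg hxa, if_neg hxb, hx1]
  have hKerase : ((Finset.univ.filter fun x => Multiset.count x m = 1).erase a).card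
      = K m - 1 := Finset.card_erase_of_mem haf
  have hdm' : Decomp m' := by
    apply IH m' hlt
    intro hodd
    exfalso
    have hodd' := Nat.odd_iff.mp hodd
    rcases hb with ⟨hev, hb1⟩ | ⟨hod, hb3⟩
    · have hbf : b ∈ (Finset.univ.filter fun x => Multiset.count x m = 1).erase a :=
        Finset.mem_erase.mpr ⟨hba, by simp [hb1]⟩
      have hKval : K m' = K m - 1 - 1 := by
        show (Finset.univ.filter fun x => Multiset.count x m' = 1).card = _
        rw [hfilter, Finset.card_erase_of_mem hbf, hKerase]
      have heq := Nat.even_iff.mp hev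
      rw [hKval] at hodd'
      omega
    · have hbnf : b ∉ (Finset.univ.filter fun x => Multiset.count x m = 1).erase a := by
        intro hc
        have := Finset.mem_filter.mp (Finset.mem_of_mem_erase hc)
        omega
      have hKval : K m' = K m - 1 := by
        show (Finset.univ.filter fun x => Multiset.count x m' = 1).card = _
        rw [hfilter, Finset.erase_eq_of_notMem hbnf, hKerase]
      have hoq := Nat.odd_iff.mp hod
      rw [hKval] at hodd'
      omega
  rw [hmeq]
  exact decomp_add (decomp_pair (Ne.symm hba)) hdm'

lemma Sdef_perm (u v : List (Fin q)) (h : (↑u : Multiset (Fin q)) = ↑v)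
    (hv : v ∈ Sdef q) : u ∈ Sdef q := by
  have hp : u.Perm v := Multiset.coe_eq_coe.mp h
  rcases hv with ⟨i, hi | hi⟩ | ⟨i, j, hij, hv⟩
  · subst hi
    exact Or.inl ⟨i, Or.inl (List.perm_replicate.mp hp)⟩
  · subst hi
    exact Or.inl ⟨i, Or.inr (List.perm_replicate.mp hp)⟩
  · subst hv
    have hlen : u.length = 2 := hp.length_eq
    match u, hlen with
    | [x, y], _ =>
      have hnd : List.Nodup [x, y] := hp.nodup_iff.mpr (by simp [hij])
      have hxy : x ≠ y := by simpa using hnd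
      exact Or.inr ⟨x, y, hxy, rfl⟩

lemma count_list_sum [DecidableEq α] :
    ∀ (L : List (Multiset α)) (a : α),
      Multiset.count a L.sum = (L.map (fun g => Multiset.count a g)).sum
  | [], a => by simp
  | g :: L, a => by
      simp [Multiset.count_add, count_list_sum L a]

lemma mem_Sdef_gen {u : List (Fin q)} (h : u ∈ Sdef q) : Gen (↑u : Multiset (Fin q)) := by
  rcases h with ⟨i, hi | hi⟩ | ⟨i, j, hij, hv⟩
  · exact Or.inl ⟨i, Or.inl (by rw [hi, Multiset.coe_replicate])⟩
  · exact Or.inl ⟨i, Or.inr (by rw [hi, Multiset.coe_replicate])⟩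
  · exact Or.inr ⟨i, j, hij, by rw [hv]; rfl⟩

lemma count_flat (hq : 1 ≤ q) (f : ℕ → List (Fin q))
    (hf : ∀ k, ∀ hk : k < q - 1, f k = List.replicate 2 (⟨k, by omega⟩ : Fin q)) :
    ∀ n, n ≤ q - 1 → ∀ a : Fin q,
      List.count a ((List.range n).flatMap f) = if (a : ℕ) < n then 2 else 0
  | 0, _, a => by simp
  | (n+1), hn, a => by
      rw [List.range_succ, List.flatMap_append]
      rw [List.count_append]
      rw [count_flat hq f hf n (by omega) a]
      have h1 : (List.flatMap f [n]).count a = if (a : ℕ) = n then 2 else 0 := by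
        have hthis : List.flatMap f [n] = f n := by simp
        rw [hthis, hf n (by omega)]
        simp only [List.count_replicate, beq_iff_eq]
        by_cases h : (a : ℕ) = n
        · rw [if_pos (Fin.ext h).symm, if_pos h]
        · rw [if_neg (fun hc => h (congrArg Fin.val hc.symm)), if_neg h]
      rw [h1]
      by_cases h2 : (a : ℕ) < n
      · rw [if_pos h2, if_neg (show ¬(a : ℕ) = n by omega),
          if_pos (show (a : ℕ) < n + 1 by omega)]
      · by_cases h3 : (a : ℕ) = n
        · rw [if_neg h2, if_pos h3, if_pos (show (a : ℕ) < n + 1 by omega)]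
        · rw [if_neg h2, if_neg h3, if_neg (show ¬(a : ℕ) < n + 1 by omega)]

lemma flat_len {β : Type*} (f : ℕ → List β) (hf : ∀ k, (f k).length = 2) :
    ∀ n, ((List.range n).flatMap f).length = 2 * n
  | 0 => by simp
  | (n+1) => by
      rw [List.range_succ, List.flatMap_append, List.length_append, flat_len f hf n]
      simp [hf n]
      omega

lemma big_condition (hq : 1 ≤ q) (w : List (Fin q)) (hlen : 2 * q ≤ w.length) :
    Odd (K (↑w : Multiset (Fin q))) → ∃ b : Fin q, 3 ≤ Multiset.count b ↑w := by
  intro hodd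
  by_contra hno
  push_neg at hno
  have hK1 : 0 < (Finset.univ.filter
      fun x => Multiset.count x (↑w : Multiset (Fin q)) = 1).card := by
    have h := Nat.odd_iff.mp hodd
    have : K (↑w : Multiset (Fin q)) =
      (Finset.univ.filter fun x => Multiset.count x (↑w : Multiset (Fin q)) = 1).card := rfl
    omega
  obtain ⟨a, haf⟩ := Finset.card_pos.mp hK1
  have ha : Multiset.count a (↑w : Multiset (Fin q)) = 1 := (Finset.mem_filter.mp haf).2
  have hcard : ∑ x : Fin q, Multiset.count x (↑w : Multiset (Fin q)) = w.length := by
    rw [sum_count_eq_card]; simp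
  have hsplit : ∑ x : Fin q, Multiset.count x (↑w : Multiset (Fin q))
      = Multiset.count a (↑w : Multiset (Fin q))
        + ∑ x ∈ Finset.univ.erase a, Multiset.count x (↑w : Multiset (Fin q)) := by
    rw [← Finset.add_sum_erase _ _ (Finset.mem_univ a)]
  have hbound : ∑ x ∈ Finset.univ.erase a, Multiset.count x (↑w : Multiset (Fin q))
      ≤ ∑ _x ∈ Finset.univ.erase a, 2 :=
    Finset.sum_le_sum (fun x _ => by have := hno x; omega)
  rw [Finset.sum_const, Finset.card_erase_of_mem (Finset.mem_univ a), Finset.card_univ,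
    Fintype.card_fin, smul_eq_mul] at hbound
  omega

end ProtoAux

open ProtoAux in
/-- For the prototypical set with `m = 2` over a `q`-letter alphabet (`q ≥ 1`),
the length of a longest word not in `S^†` is exactly `2q - 1`: the word
`x₁²x₂²⋯x_{q-1}²x_q` (of length `2q - 1`) is not in `S^†`, and every word of
length at least `2q` is in `S^†`. -/
theorem proto_m_two_longest (q : ℕ) (hq : 1 ≤ q)
    (S : Set (List (Fin q)))
    (hS : S = {w | ∃ i : Fin q, w = List.replicate 2 i ∨ w = List.replicate 3 i} ∪
              {w | ∃ i j : Fin q, i ≠ j ∧ w = [i, j]})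
    (y : List (Fin q))
    (hy : y = ((List.range (q - 1)).flatMap
            (fun k => List.replicate 2 (⟨k % q, Nat.mod_lt k (by omega)⟩ : Fin q)))
          ++ [(⟨q - 1, by omega⟩ : Fin q)]) :
    y.length = 2 * q - 1 ∧ ¬ IterShuffle S y ∧
    ∀ w : List (Fin q), 2 * q ≤ w.length → IterShuffle S w := by
  have hS' : S = Sdef q := hS
  set f : ℕ → List (Fin q) :=
    fun k => List.replicate 2 (⟨k % q, Nat.mod_lt k (by omega)⟩ : Fin q) with hfdef
  have hf : ∀ k, ∀ hk : k < q - 1, f k = List.replicate 2 (⟨k, by omega⟩ : Fin q) := by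
    intro k hk
    have he : (⟨k % q, Nat.mod_lt k (by omega)⟩ : Fin q) = (⟨k, by omega⟩ : Fin q) :=
      Fin.ext (Nat.mod_eq_of_lt (by omega))
    rw [hfdef]
    exact congrArg (List.replicate 2) he
  have hcy : ∀ a : Fin q, List.count a y = if (a : ℕ) < q - 1 then 2 else 1 := by
    intro a
    rw [hy, List.count_append, count_flat hq f hf (q - 1) le_rfl a]
    have hz : List.count a [(⟨q - 1, by omega⟩ : Fin q)]
        = if (a : ℕ) < q - 1 then 0 else 1 := by
      by_cases h : (a : ℕ) < q - 1
      · rw [if_pos h]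
        rw [List.count_singleton']
        rw [if_neg (fun hc => by
          have h2 := congrArg Fin.val hc
          simp at h2
          omega)]
      · rw [if_neg h]
        have hav : (a : ℕ) = q - 1 := by have := a.isLt; omega
        rw [List.count_singleton']
        rw [if_pos (Fin.ext hav).symm]
    rw [hz]
    by_cases h : (a : ℕ) < q - 1
    · rw [if_pos h, if_pos h, if_pos h]
    · rw [if_neg h, if_neg h, if_neg h]
  refine ⟨?_, ?_, ?_⟩
  · rw [hy, List.length_append]
    have hflen : ∀ k, (f k).length = 2 := fun k => by rw [hfdef]; simp
    rw [flat_len f hflen (q - 1)]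
    simp
    omega
  · intro hIter
    obtain ⟨l, hl, hsum⟩ := iter_decomp hIter
    apply parity_core hq (l.map Multiset.ofList)
    · intro g hg
      obtain ⟨u, hu, rfl⟩ := List.mem_map.mp hg
      exact mem_Sdef_gen (hS' ▸ hl u hu)
    · intro a
      rw [← count_list_sum, ← hsum, Multiset.coe_count, hcy a]
  · intro w hw
    obtain ⟨l, hl, hsum⟩ := main_decomp (↑w : Multiset (Fin q)) (big_condition hq w hw)
    exact iter_of_decomp (fun u v h hv => hS' ▸ Sdef_perm u v h (hS' ▸ hv)) l
      (fun u hu => hS' ▸ hl u hu) w hsum.symm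
end
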